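/- If Y is a k×n near Youden rectangle and Y is extended to an n×n Latin square L, then the (n−k)×n array formed by the new n−k rows of L is an (n−k)×n near Youden rectangle. -/

import Mathlib

open Finset

/-- The set of symbols occurring in the top `k` cells of column `j` of an
`n × n` array. -/
def topSet (n k : ℕ) (L : Fin n → Fin n → Fin n) (j : Fin n) : Finset (Fin n) :=
  (Finset.univ.filter fun i : Fin n => i.val < k).image fun i => L i j

/-- The set of symbols occurring in the bottom `n - k` cells of column `j` of
an `n × n` array. -/
def bottomRowsSet (n k : ℕ) (L : Fin n → Fin n → Fin n) (j : Fin n) : Finset (Fin n) :=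
  (Finset.univ.filter fun i : Fin n => k ≤ i.val).image fun i => L i j

/-- If the top `k` rows of a Latin square `L` form a `k × n` near Youden
rectangle, then the bottom `n - k` rows form an `(n-k) × n` near Youden
rectangle. -/
theorem near_youden_complement (n k : ℕ) (hk : 0 < k) (hkn : k < n)
    (hnd : ¬ (n - 1) ∣ k * (k - 1))
    (L : Fin n → Fin n → Fin n)
    (hrow : ∀ i, Function.Injective (L i))
    (hcol : ∀ j : Fin n, Function.Injective fun i => L i j)
    (htop : ∀ j j' : Fin n, j ≠ j' →
      (topSet n k L j ∩ topSet n k L j').card = k * (k - 1) / (n - 1) ∨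
      (topSet n k L j ∩ topSet n k L j').card = k * (k - 1) / (n - 1) + 1) :
    ∀ j j' : Fin n, j ≠ j' →
      (bottomRowsSet n k L j ∩ bottomRowsSet n k L j').card = (n - k) * (n - k - 1) / (n - 1) ∨
      (bottomRowsSet n k L j ∩ bottomRowsSet n k L j').card = (n - k) * (n - k - 1) / (n - 1) + 1 := by
  intro j j' hjj
  have hcolsurj : ∀ jj : Fin n, Function.Surjective fun i => L i jj := fun jj =>
    Finite.surjective_of_injective (hcol jj)
  have hbot : ∀ jj, bottomRowsSet n k L jj = (topSet n k L jj)ᶜ := by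
    intro jj
    ext x
    simp only [bottomRowsSet, topSet, mem_compl, mem_image, mem_filter, mem_univ, true_and,
      not_exists, not_and]
    constructor
    · rintro ⟨i, hi, rfl⟩ i' hi' he
      have h' : i' = i := hcol jj he
      subst h'
      omega
    · intro h
      obtain ⟨i, rfl⟩ := hcolsurj jj x
      exact ⟨i, le_of_not_gt fun hh => h i hh rfl, rfl⟩
  have hcardtop : ∀ jj, (topSet n k L jj).card = k := by
    intro jj
    rw [topSet, Finset.card_image_of_injective _ (hcol jj)]
    have heq : (Finset.univ.filter fun i : Fin n => i.val < k) =
        Finset.map (Fin.castLEEmb hkn.le) Finset.univ := by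
      ext i
      simp only [mem_filter, mem_univ, true_and, Finset.mem_map]
      constructor
      · intro hi
        exact ⟨⟨i.val, hi⟩, by simp [Fin.castLEEmb, Fin.ext_iff]⟩
      · rintro ⟨a, rfl⟩
        exact a.isLt
    rw [heq, Finset.card_map, Finset.card_univ, Fintype.card_fin]
  set A := topSet n k L j with hA
  set B := topSet n k L j' with hB
  have hU : (A ∪ B).card + (A ∩ B).card = A.card + B.card := card_union_add_card_inter A B
  have hle : (A ∪ B).card ≤ n := le_trans (card_le_univ _) (by simp)
  have hbotcard : (bottomRowsSet n k L j ∩ bottomRowsSet n k L j').card = n - (A ∪ B).card := by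
    rw [hbot, hbot, ← compl_union, card_compl, Fintype.card_fin]
  -- the key arithmetic identity, over ℤ
  have key : (((n - k) * (n - k - 1) / (n - 1) : ℕ) : ℤ) =
      ((k * (k - 1) / (n - 1) : ℕ) : ℤ) + n - 2 * k := by
    have hne : ((n : ℤ) - 1) ≠ 0 := by
      have : (1 : ℤ) ≤ (n : ℤ) - 1 := by
        have : 2 ≤ n := by omega
        push_cast
        omega
      omega
    have e1 : ((n - k : ℕ) : ℤ) = (n : ℤ) - k := by
      rw [Nat.cast_sub hkn.le]
    have e2 : ((n - k - 1 : ℕ) : ℤ) = (n : ℤ) - k - 1 := by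
      rw [Nat.cast_sub (by omega : 1 ≤ n - k), e1]
      norm_num
    have e3 : ((k - 1 : ℕ) : ℤ) = (k : ℤ) - 1 := by
      rw [Nat.cast_sub hk]
      norm_num
    have e4 : ((n - 1 : ℕ) : ℤ) = (n : ℤ) - 1 := by
      rw [Nat.cast_sub (by omega : 1 ≤ n)]
      norm_num
    rw [Int.natCast_div, Int.natCast_div, Nat.cast_mul, Nat.cast_mul, e1, e2, e3, e4]
    have hid : ((n : ℤ) - k) * ((n : ℤ) - k - 1) =
        (k : ℤ) * ((k : ℤ) - 1) + ((n : ℤ) - 2 * k) * ((n : ℤ) - 1) := by ring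
    rw [hid, Int.add_mul_ediv_right _ _ hne]
    ring
  have ht := htop j j' hjj
  rw [← hA, ← hB] at ht
  rw [hbotcard]
  have h1 := hcardtop j
  have h2 := hcardtop j'
  rw [← hA] at h1
  rw [← hB] at h2
  omega
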